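/- Let T be an even 1-3 tree and k ≥ 2 an integer. The graph G(T) contains a cycle of length 2k if and only if either T contains two vertex-disjoint leaf-leaf paths P₁ and P₂ whose numbers of edges sum to 2k−4, or T contains a leaf-leaf path of length 2k−2. -/

import Mathlib

/-- A vertex of a graph is a *leaf* if it has exactly one neighbour. -/
def IsLeafVertex {V : Type} (T : SimpleGraph V) (v : V) : Prop :=
  (T.neighborSet v).ncard = 1

/-- A *1-3 tree* is a finite tree in which every vertex has degree 1 or 3. -/
def IsOneThreeTree {V : Type} (T : SimpleGraph V) : Prop :=
  T.IsTree ∧ ∀ v : V, (T.neighborSet v).ncard = 1 ∨ (T.neighborSet v).ncard = 3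

/-- A tree is *even* if the (unique) path between any two leaves has even length. -/
def IsEvenTree {V : Type} (T : SimpleGraph V) : Prop :=
  ∀ u w : V, IsLeafVertex T u → IsLeafVertex T w → Even (T.dist u w)

/-- `T` has a *leaf-leaf path of length `ℓ`*: a path with `ℓ` edges whose two
endpoints are leaves (for `ℓ = 0` this is a single leaf). -/
def HasLeafLeafPath {V : Type} (T : SimpleGraph V) (ℓ : ℕ) : Prop :=
  ∃ (u w : V) (p : T.Walk u w),
    IsLeafVertex T u ∧ IsLeafVertex T w ∧ p.IsPath ∧ p.length = ℓ

/-- The adjacency relation of the graph `G(T)`: two new vertices `x = Sum.inr 0`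
and `y = Sum.inr 1` are added to `T`, joined to each other and to every leaf of `T`. -/
def gtAdj {V : Type} (T : SimpleGraph V) : (V ⊕ Fin 2) → (V ⊕ Fin 2) → Prop
  | Sum.inl u, Sum.inl v => T.Adj u v
  | Sum.inl u, Sum.inr _ => IsLeafVertex T u
  | Sum.inr _, Sum.inl v => IsLeafVertex T v
  | Sum.inr i, Sum.inr j => i ≠ j

/-- The graph `G(T)` obtained from a tree `T` by adding two new vertices `x` and
`y`, the edge `xy`, and all edges from `x` and from `y` to the leaves of `T`. -/
def gtGraph {V : Type} (T : SimpleGraph V) : SimpleGraph (V ⊕ Fin 2) where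
  Adj := gtAdj T
  symm := ⟨by
    rintro (u | i) (v | j) h
    · exact T.adj_symm h
    · exact h
    · exact h
    · exact Ne.symm h⟩
  loopless := ⟨by
    rintro (u | i) h
    · exact T.irrefl h
    · exact h rfl⟩

/-- `G` contains a cycle with exactly `ℓ` edges. -/
def HasCycleOfLength {W : Type} (G : SimpleGraph W) (ℓ : ℕ) : Prop :=
  ∃ (v : W) (c : G.Walk v v), c.IsCycle ∧ c.length = ℓ

namespace GTAux
open SimpleGraph Walk

variable {V : Type} {T : SimpleGraph V}

lemma loop_length_zero {W : Type} {G : SimpleGraph W} {u : W} (p : G.Walk u u)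
    (h : p.support.Nodup) : p.length = 0 := by
  cases p with
  | nil => rfl
  | cons h' q =>
    exfalso
    rw [Walk.support_cons, List.nodup_cons] at h
    exact h.1 q.end_mem_support

lemma pull {a b : V ⊕ Fin 2} (p : (gtGraph T).Walk a b)
    (hp : ∀ i : Fin 2, Sum.inr i ∉ p.support) :
    ∀ (u w : V), a = Sum.inl u → b = Sum.inl w →
    ∃ q : T.Walk u w, q.length = p.length ∧ p.support = q.support.map Sum.inl := by
  induction p with
  | nil =>
    rintro u w rfl hb
    obtain rfl : u = w := by simpa using hb
    exact ⟨Walk.nil, rfl, rfl⟩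
  | @cons a c b h p ih =>
    rintro u w rfl rfl
    obtain ⟨u', rfl⟩ : ∃ u', c = Sum.inl u' := by
      cases c with
      | inl u' => exact ⟨u', rfl⟩
      | inr i => exact absurd (by simp) (hp i)
    have hp' : ∀ i : Fin 2, Sum.inr i ∉ p.support := by
      intro i hi
      exact hp i (by simp [hi])
    obtain ⟨q, hq1, hq2⟩ := ih hp' u' w rfl rfl
    exact ⟨Walk.cons (show T.Adj u u' from h) q, by simp [hq1], by simp [hq2]⟩

lemma gt_adj_inr_inl {i : Fin 2} {v : V} :
    (gtGraph T).Adj (Sum.inr i) (Sum.inl v) ↔ IsLeafVertex T v := Iff.rfl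

lemma seg {m : Fin 2} {u : V} (d : (gtGraph T).Walk (Sum.inl u) (Sum.inr m))
    (hnd : d.support.Nodup)
    (ho : ∀ z ∈ d.support, z = Sum.inr m ∨ ∃ a, z = Sum.inl a) :
    ∃ (w : V) (q : T.Walk u w), IsLeafVertex T w ∧ q.IsPath ∧ q.length + 1 = d.length ∧
      d.support = q.support.map Sum.inl ++ [Sum.inr m] := by
  obtain ⟨b, h₂, f, hef⟩ := Walk.exists_eq_cons_of_ne (by simp) d.reverse
  have hes : d.reverse.support = Sum.inr m :: f.support := by rw [hef]; simp
  have hnd' : d.reverse.support.Nodup := by rw [Walk.support_reverse]; exact List.nodup_reverse.mpr hnd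
  have hmf : Sum.inr m ∉ f.support := by
    rw [hes, List.nodup_cons] at hnd'; exact hnd'.1
  have hfs : ∀ z ∈ f.support, z ∈ d.support := by
    intro z hz
    have : z ∈ d.reverse.support := by rw [hes]; simp [hz]
    rwa [Walk.support_reverse, List.mem_reverse] at this
  obtain ⟨w, rfl⟩ : ∃ a, b = Sum.inl a := by
    rcases ho b (hfs _ f.start_mem_support) with hb | hb
    · exact absurd (hb ▸ f.start_mem_support) hmf
    · exact hb
  have hfinr : ∀ i : Fin 2, Sum.inr i ∉ f.support := by
    intro i hi
    rcases ho _ (hfs _ hi) with hb | ⟨a, hb⟩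
    · exact hmf (hb ▸ hi)
    · simp at hb
  obtain ⟨q', hq1, hq2⟩ := pull f hfinr w u rfl rfl
  refine ⟨w, q'.reverse, h₂, ?_, ?_, ?_⟩
  · apply Walk.IsPath.mk'
    rw [Walk.support_reverse]
    refine List.nodup_reverse.mpr ?_
    have hh : f.support.Nodup := by
      rw [hes, List.nodup_cons] at hnd'
      exact hnd'.2
    rw [hq2] at hh
    exact hh.of_map _
  · have : d.reverse.length = f.length + 1 := by rw [hef]; simp
    rw [Walk.length_reverse] at this
    rw [Walk.length_reverse, hq1]
    omega
  · have : d.support = (Sum.inr m :: f.support).reverse := by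
      rw [← hes, Walk.support_reverse, List.reverse_reverse]
    rw [this, hq2]
    simp [Walk.support_reverse, List.map_reverse]

lemma arc {i j : Fin 2} (hij : i ≠ j) (d : (gtGraph T).Walk (Sum.inr i) (Sum.inr j))
    (hnd : d.support.Nodup) :
    d.length = 1 ∨ ∃ (u w : V) (q : T.Walk u w),
      IsLeafVertex T u ∧ IsLeafVertex T w ∧ q.IsPath ∧ q.length + 2 = d.length ∧
      d.support = Sum.inr i :: (q.support.map Sum.inl ++ [Sum.inr j]) := by
  obtain ⟨c, h₁, d', hd'⟩ := Walk.exists_eq_cons_of_ne (by simp [hij]) d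
  have hds : d.support = Sum.inr i :: d'.support := by rw [hd']; simp
  have hnd'' : d'.support.Nodup ∧ Sum.inr i ∉ d'.support := by
    rw [hds, List.nodup_cons] at hnd; exact ⟨hnd.2, hnd.1⟩
  cases c with
  | inr i' =>
    left
    have hii' : i ≠ i' := h₁
    have : i' = j := by omega
    subst this
    have : d'.length = 0 := loop_length_zero d' hnd''.1
    rw [hd']; simp [this]
  | inl u =>
    right
    have hu : IsLeafVertex T u := h₁
    have ho : ∀ z ∈ d'.support, z = Sum.inr j ∨ ∃ a, z = Sum.inl a := by
      intro z hz
      cases z with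
      | inl a => exact Or.inr ⟨a, rfl⟩
      | inr i' =>
        left
        have h1 : i' ≠ i := fun h => hnd''.2 (h ▸ hz)
        congr 1
        omega
    obtain ⟨w, q, hw, hq, hlen, hsup⟩ := seg d' hnd''.1 ho
    refine ⟨u, w, q, hu, hw, hq, ?_, ?_⟩
    · have : d.length = d'.length + 1 := by rw [hd']; simp
      omega
    · rw [hds, hsup]

lemma even_path_length [DecidableEq V] (hTr : T.IsTree)
    (hTe : ∀ u w : V, IsLeafVertex T u → IsLeafVertex T w → Even (T.dist u w))
    {u w : V} (p : T.Walk u w) (hp : p.IsPath) (hu : IsLeafVertex T u)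
    (hw : IsLeafVertex T w) : Even p.length := by
  obtain ⟨q, hq⟩ := hTr.isConnected.exists_walk_length_eq_dist u w
  have hqb : q.bypass.IsPath := q.bypass_isPath
  have h1 : q.bypass.length ≤ T.dist u w := hq ▸ q.length_bypass_le
  have h2 : T.dist u w ≤ q.bypass.length := SimpleGraph.dist_le _
  have heq : (⟨p, hp⟩ : T.Path u w) = ⟨q.bypass, hqb⟩ := hTr.IsAcyclic.path_unique _ _
  have hlen : p.length = q.bypass.length := by
    have := congrArg (fun r : T.Path u w => r.1.length) heq
    simpa using this
  rw [hlen]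
  have h3 : q.bypass.length = T.dist u w := le_antisymm h1 h2
  rw [h3]
  exact hTe u w hu hw

lemma rotate_length {W : Type} [DecidableEq W] {G : SimpleGraph W} {u v : W} (c : G.Walk v v)
    (h : u ∈ c.support) : (c.rotate u h).length = c.length := by
  rw [Walk.rotate, Walk.length_append]
  have := congrArg Walk.length (c.take_spec h)
  rw [Walk.length_append] at this
  omega

lemma end_mem_tail {W : Type} {G : SimpleGraph W} {u w : W} (p : G.Walk u w)
    (h : u ≠ w) : w ∈ p.support.tail := by
  have := p.end_mem_support
  rw [p.support_eq_cons, List.mem_cons] at this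
  rcases this with h' | h'
  · exact absurd h'.symm h
  · exact h'

lemma end_mem_tail_closed {W : Type} {G : SimpleGraph W} {v : W} (c : G.Walk v v)
    (h : ¬c.Nil) : v ∈ c.support.tail := by
  obtain ⟨b, hadj, q, rfl⟩ := Walk.not_nil_iff.mp h
  simpa using q.end_mem_support

lemma no_inr (hac : T.IsAcyclic) {v : V ⊕ Fin 2}
    (c : (gtGraph T).Walk v v) (hc : c.IsCycle)
    (h : ∀ i : Fin 2, Sum.inr i ∉ c.support) : False := by
  obtain ⟨a, rfl⟩ : ∃ a, v = Sum.inl a := by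
    cases v with
    | inl a => exact ⟨a, rfl⟩
    | inr i => exact absurd c.start_mem_support (h i)
  obtain ⟨q, hq1, hq2⟩ := pull c h a a rfl rfl
  have h3 : 3 ≤ q.length := hq1 ▸ hc.three_le_length
  have hqt : q.support.tail.Nodup := by
    have := hc.support_nodup
    rw [hq2] at this
    rw [q.support_eq_cons, List.map_cons] at this
    simp only [List.tail_cons] at this
    exact this.of_map _
  cases q with
  | nil => simp at h3
  | @cons _ b _ h' r =>
    have hrs : r.support.Nodup := by simpa using hqt
    have hab : a ≠ b := by
      intro heq
      have := loop_length_zero (heq ▸ r) (by subst heq; exact hrs)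
      subst heq
      simp [this] at h3
    have hr : r.IsPath := Walk.IsPath.mk' hrs
    have hsingle : (Walk.cons h'.symm Walk.nil).IsPath := by
      apply Walk.IsPath.mk'
      simp [Ne.symm hab]
    have := hac.path_unique ⟨r, hr⟩ ⟨Walk.cons h'.symm Walk.nil, hsingle⟩
    have hlen : r.length = 1 := by
      have := congrArg (fun z : T.Path _ _ => z.1.length) this
      simpa using this
    simp [hlen] at h3

lemma one_inr [DecidableEq (V ⊕ Fin 2)] {i j : Fin 2} (hij : i ≠ j) {v : V ⊕ Fin 2}
    (c : (gtGraph T).Walk v v) (hc : c.IsCycle)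
    (hi : Sum.inr i ∈ c.support) (hj : Sum.inr j ∉ c.support) :
    ∃ (u w : V) (q : T.Walk u w), IsLeafVertex T u ∧ IsLeafVertex T w ∧ q.IsPath ∧
      q.length + 2 = c.length := by
  set c' := c.rotate _ hi with hc'def
  have hcyc : c'.IsCycle := hc.rotate hi
  have hlen : c'.length = c.length := rotate_length c hi
  have hjs : Sum.inr j ∉ c'.support := by
    intro hmem
    apply hj
    rw [c'.support_eq_cons, List.mem_cons] at hmem
    rcases hmem with h' | h'
    · exact (hij (Sum.inr.inj h'.symm)).elim
    · have hperm := (c.support_rotate _ hi).perm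
      have : Sum.inr j ∈ c.support.tail := hperm.mem_iff.mp h'
      exact List.mem_of_mem_tail this
  obtain ⟨b, h₁, p, hcp⟩ := Walk.not_nil_iff.mp hcyc.not_nil
  have hps : p.support = c'.support.tail := by rw [hcp]; simp
  have hpnd : p.support.Nodup := hps ▸ hcyc.support_nodup
  obtain ⟨u, rfl⟩ : ∃ u, b = Sum.inl u := by
    cases b with
    | inl u => exact ⟨u, rfl⟩
    | inr i' =>
      exfalso
      have hi' : i ≠ i' := h₁
      have : i' = j := by omega
      subst this
      exact hjs (by rw [hcp]; simp)
  have hu : IsLeafVertex T u := h₁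
  have ho : ∀ z ∈ p.support, z = Sum.inr i ∨ ∃ a, z = Sum.inl a := by
    intro z hz
    cases z with
    | inl a => exact Or.inr ⟨a, rfl⟩
    | inr i' =>
      left
      have : Sum.inr i' ∈ c'.support := by rw [hcp]; simp [hz]
      have : i' ≠ j := fun h => hjs (h ▸ this)
      congr 1
      omega
  obtain ⟨w, q, hw, hq, hlq, _⟩ := seg p hpnd ho
  refine ⟨u, w, q, hu, hw, hq, ?_⟩
  have : c'.length = p.length + 1 := by rw [hcp]; simp
  omega

lemma forward [DecidableEq (V ⊕ Fin 2)] (hTr : T.IsTree)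
    (hTe : ∀ u w : V, IsLeafVertex T u → IsLeafVertex T w → Even (T.dist u w))
    (k : ℕ) (hk : 2 ≤ k) {v : V ⊕ Fin 2}
    (c : (gtGraph T).Walk v v) (hc : c.IsCycle) (hlen : c.length = 2 * k) :
    ((∃ (u₁ w₁ u₂ w₂ : V) (p₁ : T.Walk u₁ w₁) (p₂ : T.Walk u₂ w₂),
        IsLeafVertex T u₁ ∧ IsLeafVertex T w₁ ∧
        IsLeafVertex T u₂ ∧ IsLeafVertex T w₂ ∧
        p₁.IsPath ∧ p₂.IsPath ∧ p₁.support.Disjoint p₂.support ∧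
        p₁.length + p₂.length = 2 * k - 4) ∨
      (∃ (u w : V) (p : T.Walk u w),
        IsLeafVertex T u ∧ IsLeafVertex T w ∧ p.IsPath ∧ p.length = 2 * k - 2)) := by
  classical
  rcases Classical.em ((Sum.inr (0 : Fin 2) : V ⊕ Fin 2) ∈ c.support) with h0 | h0
  · rcases Classical.em ((Sum.inr (1 : Fin 2) : V ⊕ Fin 2) ∈ c.support) with h1 | h1
    · -- both x and y on the cycle
      set c' := c.rotate _ h0 with hc'def
      have hcyc : c'.IsCycle := hc.rotate h0
      have hlen' : c'.length = 2 * k := by rw [rotate_length]; exact hlen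
      have hy' : Sum.inr (1 : Fin 2) ∈ c'.support := by
        have h1t : Sum.inr (1 : Fin 2) ∈ c.support.tail := by
          rw [c.support_eq_cons, List.mem_cons] at h1
          rcases h1 with h' | h'
          · exact h' ▸ end_mem_tail_closed c hc.not_nil
          · exact h'
        have hperm := (c.support_rotate _ h0).perm
        exact List.mem_of_mem_tail (hperm.symm.mem_iff.mp h1t)
      set d₁ := c'.takeUntil _ hy' with hd₁
      set d₂ := c'.dropUntil _ hy' with hd₂
      have hspec : d₁.append d₂ = c' := c'.take_spec hy'
      have hlsum : d₁.length + d₂.length = 2 * k := by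
        have := congrArg Walk.length hspec
        rw [Walk.length_append] at this
        omega
      have hsupp : c'.support.tail = d₁.support.tail ++ d₂.support.tail := by
        have := congrArg Walk.support hspec
        rw [Walk.support_append] at this
        rw [← this, d₁.support_eq_cons]
        rfl
      have hnd : (d₁.support.tail ++ d₂.support.tail).Nodup := hsupp ▸ hcyc.support_nodup
      have hdisj : d₁.support.tail.Disjoint d₂.support.tail := List.disjoint_of_nodup_append hnd
      have hx2 : Sum.inr (0 : Fin 2) ∈ d₂.support.tail := end_mem_tail d₂ (by simp)
      have hy1 : Sum.inr (1 : Fin 2) ∈ d₁.support.tail := end_mem_tail d₁ (by simp)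
      have hnd₁ : d₁.support.Nodup := by
        rw [d₁.support_eq_cons, List.nodup_cons]
        exact ⟨fun hmem => hdisj.symm hx2 hmem, (List.nodup_append.mp hnd).1⟩
      have hnd₂ : d₂.support.Nodup := by
        rw [d₂.support_eq_cons, List.nodup_cons]
        exact ⟨fun hmem => hdisj hy1 hmem, (List.nodup_append.mp hnd).2.1⟩
      rcases arc (by simp : (0 : Fin 2) ≠ 1) d₁ hnd₁ with hone₁ | ⟨u₁, w₁, q₁, hu₁, hw₁, hq₁, hql₁, hqs₁⟩
      · rcases arc (by simp : (1 : Fin 2) ≠ 0) d₂ hnd₂ with hone₂ | ⟨u₂, w₂, q₂, hu₂, hw₂, hq₂, hql₂, hqs₂⟩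
        · omega
        · exfalso
          have hev := even_path_length hTr hTe q₂ hq₂ hu₂ hw₂
          rw [Nat.even_iff] at hev
          omega
      · rcases arc (by simp : (1 : Fin 2) ≠ 0) d₂ hnd₂ with hone₂ | ⟨u₂, w₂, q₂, hu₂, hw₂, hq₂, hql₂, hqs₂⟩
        · exfalso
          have hev := even_path_length hTr hTe q₁ hq₁ hu₁ hw₁
          rw [Nat.even_iff] at hev
          omega
        · left
          refine ⟨u₁, w₁, u₂, w₂, q₁, q₂, hu₁, hw₁, hu₂, hw₂, hq₁, hq₂, ?_, by omega⟩
          intro a ha₁ ha₂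
          have h₁ : Sum.inl a ∈ d₁.support.tail := by
            rw [hqs₁] at hnd₁ ⊢
            simp only [List.tail_cons]
            exact List.mem_append_left _ (List.mem_map_of_mem ha₁)
          have h₂ : Sum.inl a ∈ d₂.support.tail := by
            rw [hqs₂] at hnd₂ ⊢
            simp only [List.tail_cons]
            exact List.mem_append_left _ (List.mem_map_of_mem ha₂)
          exact hdisj h₁ h₂
    · right
      obtain ⟨u, w, q, hu, hw, hq, hql⟩ := one_inr (by simp : (0:Fin 2) ≠ 1) c hc h0 h1
      exact ⟨u, w, q, hu, hw, hq, by omega⟩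
  · rcases Classical.em ((Sum.inr (1 : Fin 2) : V ⊕ Fin 2) ∈ c.support) with h1 | h1
    · right
      obtain ⟨u, w, q, hu, hw, hq, hql⟩ := one_inr (by simp : (1:Fin 2) ≠ 0) c hc h1 h0
      exact ⟨u, w, q, hu, hw, hq, by omega⟩
    · exfalso
      refine no_inr hTr.IsAcyclic c hc ?_
      intro i
      fin_cases i
      · exact h0
      · exact h1

def inlHom : T →g gtGraph T := ⟨Sum.inl, fun h => h⟩

lemma inlHom_apply (a : V) : (inlHom : T →g gtGraph T) a = Sum.inl a := rfl

lemma map_support {a b : V} (p : T.Walk a b) :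
    (p.map inlHom).support = p.support.map Sum.inl := by
  rw [Walk.support_map]; rfl

lemma map_length {a b : V} (p : T.Walk a b) :
    (p.map inlHom).length = p.length := Walk.length_map _ _

lemma inr_not_mem_map {a b : V} (p : T.Walk a b) (i : Fin 2) :
    Sum.inr i ∉ (p.map inlHom).support := by
  rw [map_support]
  simp

lemma edge_with_inr_not_mem {a b : V} (p : T.Walk a b) (i : Fin 2) (z : V ⊕ Fin 2) :
    s(Sum.inr i, z) ∉ (p.map inlHom).edges := by
  intro h
  exact inr_not_mem_map p i (Walk.fst_mem_support_of_mem_edges _ h)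

lemma backward_single (k : ℕ) (hk : 2 ≤ k) {u w : V} (p : T.Walk u w)
    (hu : IsLeafVertex T u) (hw : IsLeafVertex T w)
    (hp : p.IsPath) (hl : p.length = 2 * k - 2) :
    ∃ (v : V ⊕ Fin 2) (c : (gtGraph T).Walk v v), c.IsCycle ∧ c.length = 2 * k := by
  have hne : u ≠ w := by
    rintro rfl
    have := loop_length_zero p hp.support_nodup
    omega
  have hxu : (gtGraph T).Adj (Sum.inr (0 : Fin 2)) ((inlHom : T →g gtGraph T) u) := hu
  have hwx : (gtGraph T).Adj ((inlHom : T →g gtGraph T) w) (Sum.inr (0 : Fin 2)) := hw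
  refine ⟨Sum.inr 0, Walk.cons hxu ((p.map inlHom).concat hwx), ?_, ?_⟩
  · rw [Walk.cons_isCycle_iff]
    constructor
    · apply Walk.IsPath.mk'
      rw [Walk.support_concat, map_support]
      rw [List.nodup_append]
      refine ⟨(hp.support_nodup).map Sum.inl_injective, List.nodup_singleton _, ?_⟩
      intro z hz
      simp only [List.mem_singleton]
      rintro _ rfl hzz
      subst hzz
      simp at hz
    · rw [Walk.edges_concat, List.concat_eq_append, List.mem_append]
      rintro (h | h)
      · exact edge_with_inr_not_mem p 0 _ h
      · rw [List.mem_singleton, Sym2.eq_iff] at h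
        rcases h with ⟨h1, _⟩ | ⟨_, h2⟩
        · exact absurd h1 (by simp [inlHom_apply])
        · rw [inlHom_apply] at h2
          exact hne (Sum.inl.inj h2)
  · rw [Walk.length_cons, Walk.length_concat, map_length]
    omega

lemma backward_double (k : ℕ) (hk : 2 ≤ k) {u₁ w₁ u₂ w₂ : V}
    (p₁ : T.Walk u₁ w₁) (p₂ : T.Walk u₂ w₂)
    (hu₁ : IsLeafVertex T u₁) (hw₁ : IsLeafVertex T w₁)
    (hu₂ : IsLeafVertex T u₂) (hw₂ : IsLeafVertex T w₂)
    (hp₁ : p₁.IsPath) (hp₂ : p₂.IsPath)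
    (hdisj : p₁.support.Disjoint p₂.support)
    (hl : p₁.length + p₂.length = 2 * k - 4) :
    ∃ (v : V ⊕ Fin 2) (c : (gtGraph T).Walk v v), c.IsCycle ∧ c.length = 2 * k := by
  have hxu₁ : (gtGraph T).Adj (Sum.inr (0 : Fin 2)) ((inlHom : T →g gtGraph T) u₁) := hu₁
  have hw₁y : (gtGraph T).Adj ((inlHom : T →g gtGraph T) w₁) (Sum.inr (1 : Fin 2)) := hw₁
  have hyu₂ : (gtGraph T).Adj (Sum.inr (1 : Fin 2)) ((inlHom : T →g gtGraph T) u₂) := hu₂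
  have hw₂x : (gtGraph T).Adj ((inlHom : T →g gtGraph T) w₂) (Sum.inr (0 : Fin 2)) := hw₂
  set R : (gtGraph T).Walk ((inlHom : T →g gtGraph T) u₁) (Sum.inr (0 : Fin 2)) :=
    (p₁.map inlHom).append (Walk.cons hw₁y (Walk.cons hyu₂ ((p₂.map inlHom).concat hw₂x)))
    with hR
  have hRsupp : R.support =
      p₁.support.map Sum.inl ++
        (Sum.inr 1 :: (p₂.support.map Sum.inl ++ [Sum.inr 0])) := by
    rw [hR, Walk.support_append, map_support]
    congr 1
    rw [Walk.support_cons, List.tail_cons, Walk.support_cons, Walk.support_concat,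
      map_support]
  have hu₁w₂ : u₁ ≠ w₂ := by
    intro h
    exact hdisj p₁.start_mem_support (h ▸ p₂.end_mem_support)
  refine ⟨Sum.inr 0, Walk.cons hxu₁ R, ?_, ?_⟩
  · rw [Walk.cons_isCycle_iff]
    constructor
    · apply Walk.IsPath.mk'
      rw [hRsupp, List.nodup_append]
      refine ⟨hp₁.support_nodup.map Sum.inl_injective, ?_, ?_⟩
      · rw [List.nodup_cons, List.nodup_append]
        refine ⟨?_, hp₂.support_nodup.map Sum.inl_injective, List.nodup_singleton _, ?_⟩
        · simp
        · intro z hz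
          simp only [List.mem_singleton]
          rintro _ rfl rfl
          simp at hz
      · intro z hz
        obtain ⟨a, ha, rfl⟩ := List.mem_map.mp hz
        intro b hmem hab
        subst hab
        rw [List.mem_cons, List.mem_append, List.mem_singleton] at hmem
        rcases hmem with h | h | h
        · simp at h
        · obtain ⟨b, hb, hba⟩ := List.mem_map.mp h
          exact hdisj ha (Sum.inl.inj hba ▸ hb)
        · simp at h
    · have hRe : R.edges =
          (p₁.map inlHom).edges ++
            (s(Sum.inl w₁, Sum.inr 1) :: s(Sum.inr 1, Sum.inl u₂) ::
              ((p₂.map inlHom).edges ++ [s(Sum.inl w₂, Sum.inr 0)])) := by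
        rw [hR, Walk.edges_append, Walk.edges_cons, Walk.edges_cons, Walk.edges_concat,
          List.concat_eq_append]
        rfl
      rw [hRe]
      intro hmem
      rw [List.mem_append] at hmem
      rcases hmem with h | h
      · exact edge_with_inr_not_mem p₁ 0 _ h
      · rw [List.mem_cons] at h
        rcases h with h | h
        · rw [Sym2.eq_iff] at h
          rcases h with ⟨h1, _⟩ | ⟨h1, _⟩ <;> simp at h1
        · rw [List.mem_cons] at h
          rcases h with h | h
          · rw [Sym2.eq_iff] at h
            rcases h with ⟨h1, _⟩ | ⟨h1, _⟩ <;> simp at h1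
          · rw [List.mem_append] at h
            rcases h with h | h
            · exact edge_with_inr_not_mem p₂ 0 _ h
            · rw [List.mem_singleton, Sym2.eq_iff] at h
              rcases h with ⟨h1, _⟩ | ⟨_, h2⟩
              · simp at h1
              · exact hu₁w₂ (Sum.inl.inj h2)
  · rw [Walk.length_cons, hR, Walk.length_append, map_length, Walk.length_cons,
      Walk.length_cons, Walk.length_concat, map_length]
    omega

end GTAux

/-- Let `T` be an even 1-3 tree and `k ≥ 2` an integer.  The
graph `G(T)` contains a cycle of length `2k` if and only if either `T` contains
two vertex-disjoint leaf-leaf paths whose numbers of edges sum to `2k−4`, or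
`T` contains a leaf-leaf path of length `2k−2`. -/


theorem gt_even_cycle_iff_leaf_paths {V : Type} [Fintype V] (T : SimpleGraph V)
    (hT : IsOneThreeTree T) (hTe : IsEvenTree T) (k : ℕ) (hk : 2 ≤ k) :
    HasCycleOfLength (gtGraph T) (2 * k) ↔
      ((∃ (u₁ w₁ u₂ w₂ : V) (p₁ : T.Walk u₁ w₁) (p₂ : T.Walk u₂ w₂),
          IsLeafVertex T u₁ ∧ IsLeafVertex T w₁ ∧
          IsLeafVertex T u₂ ∧ IsLeafVertex T w₂ ∧
          p₁.IsPath ∧ p₂.IsPath ∧ p₁.support.Disjoint p₂.support ∧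
          p₁.length + p₂.length = 2 * k - 4) ∨
        HasLeafLeafPath T (2 * k - 2)) := by
  constructor
  · rintro ⟨v, c, hc, hlen⟩
    classical
    rcases GTAux.forward hT.1 hTe k hk c hc hlen with h | ⟨u, w, p, h1, h2, h3, h4⟩
    · exact Or.inl h
    · exact Or.inr ⟨u, w, p, h1, h2, h3, h4⟩
  · rintro (⟨u₁, w₁, u₂, w₂, p₁, p₂, hu₁, hw₁, hu₂, hw₂, hp₁, hp₂, hdisj, hl⟩ |
      ⟨u, w, p, hu, hw, hp, hl⟩)
    · exact GTAux.backward_double k hk p₁ p₂ hu₁ hw₁ hu₂ hw₂ hp₁ hp₂ hdisj hl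
    · exact GTAux.backward_single k hk p hu hw hp hl
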